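/- Let φ be a modal CNF formula whose modalities are not indexed by atoms, and let G(φ) be its colored graph. Then: (a) every consistent permutation σ that is a symmetry of φ induces a colored automorphism of G(φ) that maps each literal vertex l to the literal vertex σ(l) and each clause-occurrence vertex for a clause C to a clause-occurrence vertex for σ(C) of the same color; and (b) conversely, the restriction to literal vertices of any colored automorphism of G(φ) is a consistent permutation of the literals occurring in φ which (extended by the identity on all other literals) is a symmetry of φ. -/

import Mathlib

namespace ModalSym

inductive Lit (Atom : Type) : Type
  | pos (a : Atom) : Lit Atom
  | neg (a : Atom) : Lit Atom
  deriving DecidableEq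

namespace Lit
def flip {Atom : Type} : Lit Atom → Lit Atom
  | pos a => neg a
  | neg a => pos a
def atom {Atom : Type} : Lit Atom → Atom
  | pos a => a
  | neg a => a
end Lit

/-- A permutation `σ` of literals is consistent when it commutes with negation. -/
def Consistent {Atom : Type} (σ : Lit Atom → Lit Atom) : Prop :=
  ∀ l, σ l.flip = (σ l).flip

/-- Modal CNF clauses of modal depth at most `n`: a clause is a finite set whose
elements are literals or modal literals `□ₘ C` / `¬□ₘ C` (`Bool` gives the polarity,
`true` for `□ₘ C`). -/
@[reducible] def ClauseT (Atom Mod : Type) : ℕ → Type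
  | 0 => Finset (Lit Atom)
  | n+1 => Finset (Lit Atom ⊕ Bool × Mod × ClauseT Atom Mod n)

instance instDecEqClauseT {Atom Mod : Type} [DecidableEq Atom] [DecidableEq Mod] :
    ∀ n, DecidableEq (ClauseT Atom Mod n)
  | 0 => inferInstanceAs (DecidableEq (Finset (Lit Atom)))
  | n+1 =>
    letI := instDecEqClauseT (Atom := Atom) (Mod := Mod) n
    inferInstanceAs (DecidableEq (Finset (Lit Atom ⊕ Bool × Mod × ClauseT Atom Mod n)))

/-- A modal CNF formula (of modal depth at most `n`): a finite set of clauses. -/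
@[reducible] def FormT (Atom Mod : Type) (n : ℕ) : Type := Finset (ClauseT Atom Mod n)

/-- A pointed Kripke model. -/
structure KModel (Atom Mod : Type) : Type 1 where
  W : Type
  pt : W
  V : W → Set Atom
  R : Mod → W → W → Prop

def satLit {Atom : Type} (S : Set Atom) : Lit Atom → Prop
  | .pos a => a ∈ S
  | .neg a => a ∉ S

def satClause {Atom Mod : Type} (M : KModel Atom Mod) :
    ∀ n, ClauseT Atom Mod n → M.W → Prop
  | 0, C, v => ∃ l ∈ C, satLit (M.V v) l
  | n+1, C, v => ∃ e ∈ C,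
      match e with
      | Sum.inl l => satLit (M.V v) l
      | Sum.inr (b, m, C') =>
          cond b (∀ u, M.R m v u → satClause M n C' u)
                 (¬ ∀ u, M.R m v u → satClause M n C' u)

/-- `M ⊨ φ`. -/
def satForm {Atom Mod : Type} (M : KModel Atom Mod) {n : ℕ} (φ : FormT Atom Mod n) : Prop :=
  ∀ C ∈ φ, satClause M n C M.pt

/-- `L_S`, the complete consistent set of literals generated by `S ⊆ Atom`. -/
def genLits {Atom : Type} (S : Set Atom) : Set (Lit Atom) := {l | satLit S l}

def permClause {Atom Mod : Type} [DecidableEq Atom] [DecidableEq Mod]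
    (σ : Lit Atom → Lit Atom) : ∀ n, ClauseT Atom Mod n → ClauseT Atom Mod n
  | 0, C => C.image σ
  | n+1, C => C.image fun e =>
      match e with
      | Sum.inl l => Sum.inl (σ l)
      | Sum.inr (b, m, C') => Sum.inr (b, m, permClause σ n C')

/-- The action `σ(φ)` of a permutation of literals on a modal CNF formula. -/
def permForm {Atom Mod : Type} [DecidableEq Atom] [DecidableEq Mod]
    (σ : Lit Atom → Lit Atom) {n : ℕ} (φ : FormT Atom Mod n) : FormT Atom Mod n :=
  φ.image (permClause σ n)

/-- The permuted model `σ(M)`, with `V'(v) = σ(L_{V(v)}) ∩ Atom`. -/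
def permModel {Atom Mod : Type} (σ : Lit Atom → Lit Atom) (M : KModel Atom Mod) :
    KModel Atom Mod where
  W := M.W
  pt := M.pt
  V := fun v => {a | Lit.pos a ∈ σ '' genLits (M.V v)}
  R := M.R

def IsBisim {Atom Mod : Type} (M M' : KModel Atom Mod) (Z : M.W → M'.W → Prop) : Prop :=
  Z M.pt M'.pt ∧
  (∀ v v', Z v v' → ∀ a, a ∈ M.V v ↔ a ∈ M'.V v') ∧
  (∀ v v' m u, Z v v' → M.R m v u → ∃ u', M'.R m v' u' ∧ Z u u') ∧
  (∀ v v' m u', Z v v' → M'.R m v' u' → ∃ u, M.R m v u ∧ Z u u')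

def Bisimilar {Atom Mod : Type} (M M' : KModel Atom Mod) : Prop := ∃ Z, IsBisim M M' Z

def IsSigmaSim {Atom Mod : Type} (σ : Lit Atom → Lit Atom) (M M' : KModel Atom Mod)
    (Z : M.W → M'.W → Prop) : Prop :=
  Z M.pt M'.pt ∧
  (∀ v v', Z v v' → ∀ l, l ∈ genLits (M.V v) ↔ σ l ∈ genLits (M'.V v')) ∧
  (∀ v v' m u, Z v v' → M.R m v u → ∃ u', M'.R m v' u' ∧ Z u u') ∧
  (∀ v v' m u', Z v v' → M'.R m v' u' → ∃ u, M.R m v u ∧ Z u u')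

/-- `M ,→σ M'`. -/
def SigmaSim {Atom Mod : Type} (σ : Lit Atom → Lit Atom) (M M' : KModel Atom Mod) : Prop :=
  ∃ Z, IsSigmaSim σ M M' Z

/-- `IsPathFrom M v p`: `p` is a valid path (list of (modality, state) steps) starting at `v`. -/
def IsPathFrom {Atom Mod : Type} (M : KModel Atom Mod) : M.W → List (Mod × M.W) → Prop
  | _, [] => True
  | v, s :: rest => M.R s.1 v s.2 ∧ IsPathFrom M s.2 rest

def pathLast {Atom Mod : Type} (M : KModel Atom Mod) : M.W → List (Mod × M.W) → M.W
  | v, [] => v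
  | _, s :: rest => pathLast M s.2 rest

/-- A tree model: every state is the last state of exactly one rooted path. -/
def IsTree {Atom Mod : Type} (M : KModel Atom Mod) : Prop :=
  ∀ v : M.W, ∃! p : List (Mod × M.W), IsPathFrom M M.pt p ∧ pathLast M M.pt p = v

/-- The depth of a state: the (minimal) length of a rooted path leading to it. -/
noncomputable def depth {Atom Mod : Type} (M : KModel Atom Mod) (v : M.W) : ℕ :=
  sInf {d | ∃ p, IsPathFrom M M.pt p ∧ pathLast M M.pt p = v ∧ p.length = d}

/-- The unravelling `T(M)`. -/
def unravel {Atom Mod : Type} (M : KModel Atom Mod) : KModel Atom Mod where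
  W := {p : List (Mod × M.W) // IsPathFrom M M.pt p}
  pt := ⟨[], trivial⟩
  V := fun p => M.V (pathLast M M.pt p.1)
  R := fun m p p' => ∃ v, p'.1 = p.1 ++ [(m, v)]

/-- `head(σ̄)`: the first permutation of the sequence, identity for the empty sequence. -/
def headP {Atom : Type} (σs : List (Lit Atom → Lit Atom)) : Lit Atom → Lit Atom :=
  σs.headD id

def lpermClause {Atom Mod : Type} [DecidableEq Atom] [DecidableEq Mod]
    (σs : List (Lit Atom → Lit Atom)) : ∀ n, ClauseT Atom Mod n → ClauseT Atom Mod n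
  | 0, C => C.image (headP σs)
  | n+1, C => C.image fun e =>
      match e with
      | Sum.inl l => Sum.inl (headP σs l)
      | Sum.inr (b, m, C') => Sum.inr (b, m, lpermClause σs.tail n C')

/-- The action `σ̄(φ)` of a permutation sequence on a modal CNF formula. -/
def lpermForm {Atom Mod : Type} [DecidableEq Atom] [DecidableEq Mod]
    (σs : List (Lit Atom → Lit Atom)) {n : ℕ} (φ : FormT Atom Mod n) : FormT Atom Mod n :=
  φ.image (lpermClause σs n)

/-- The layered permuted model `σ̄(M)` (meaningful on tree models):
at a state of depth `d` the permutation `head(σ̄_{d+1})` is used. -/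
noncomputable def lpermModel {Atom Mod : Type} (σs : List (Lit Atom → Lit Atom))
    (M : KModel Atom Mod) : KModel Atom Mod where
  W := M.W
  pt := M.pt
  V := fun v => {a | Lit.pos a ∈ headP (σs.drop (depth M v)) '' genLits (M.V v)}
  R := M.R

def IsLSim {Atom Mod : Type} (σs : List (Lit Atom → Lit Atom)) (M M' : KModel Atom Mod)
    (Z : ℕ → M.W → M'.W → Prop) : Prop :=
  Z 0 M.pt M'.pt ∧
  (∀ i v v', Z i v v' →
    ∀ l, l ∈ genLits (M.V v) ↔ headP (σs.drop i) l ∈ genLits (M'.V v')) ∧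
  (∀ i v v' m u, Z i v v' → M.R m v u → ∃ u', M'.R m v' u' ∧ Z (i+1) u u') ∧
  (∀ i v v' m u', Z i v v' → M'.R m v' u' → ∃ u, M.R m v u ∧ Z (i+1) u u')

/-- `M ,→σ̄ M'`. -/
def LSim {Atom Mod : Type} (σs : List (Lit Atom → Lit Atom)) (M M' : KModel Atom Mod) : Prop :=
  ∃ Z, IsLSim σs M M' Z

/-- `Mod_C(φ)`: the models in the class `𝒞` satisfying `φ`. -/
def ModC {Atom Mod : Type} (𝒞 : Set (KModel Atom Mod)) {n : ℕ} (φ : FormT Atom Mod n) :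
    Set (KModel Atom Mod) := {M ∈ 𝒞 | satForm M φ}

/-- `φ ⊨_C ψ`. -/
def Entails {Atom Mod : Type} (𝒞 : Set (KModel Atom Mod)) {n₁ n₂ : ℕ}
    (φ : FormT Atom Mod n₁) (ψ : FormT Atom Mod n₂) : Prop :=
  ModC 𝒞 φ ⊆ ModC 𝒞 ψ


/-! Colored graph `G(φ)` associated with a modal CNF formula `φ`
(the modalities are not indexed by atoms, so there are no `E₂` edges). -/

/-- A clause packaged with its depth bound. -/
abbrev SClause (Atom Mod : Type) := Σ k : ℕ, ClauseT Atom Mod k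

def permSClause {Atom Mod : Type} [DecidableEq Atom] [DecidableEq Mod]
    (σ : Lit Atom → Lit Atom) (C : SClause Atom Mod) : SClause Atom Mod :=
  ⟨C.1, permClause σ C.1 C.2⟩

/-- The literals directly contained in a clause. -/
def topLits {Atom Mod : Type} : ∀ k : ℕ, ClauseT Atom Mod k → Set (Lit Atom)
  | 0, C => {l | l ∈ C}
  | _+1, C => {l | Sum.inl l ∈ C}

/-- All literals occurring in a clause, at any modal depth. -/
def litsIn {Atom Mod : Type} : ∀ k : ℕ, ClauseT Atom Mod k → Set (Lit Atom)
  | 0, C => {l | l ∈ C}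
  | k+1, C => {l | Sum.inl l ∈ C} ∪
      {l | ∃ (b : Bool) (m : Mod) (C' : ClauseT Atom Mod k),
            Sum.inr (b, m, C') ∈ C ∧ l ∈ litsIn k C'}

/-- The atom `a` occurs in `φ` (in either polarity, at any modal depth). -/
def atomOccurs {Atom Mod : Type} {n : ℕ} (φ : FormT Atom Mod n) (a : Atom) : Prop :=
  (∃ C ∈ φ, Lit.pos a ∈ litsIn n C) ∨ (∃ C ∈ φ, Lit.neg a ∈ litsIn n C)

/-- `memModal b m C' k C`: the clause `C` contains the modal literal with polarity `b`
(`true` for `□`, `false` for `¬□`), modality `m` and clause `C'`. -/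
def memModal {Atom Mod : Type} (b : Bool) (m : Mod) (C' : SClause Atom Mod) :
    ∀ k : ℕ, ClauseT Atom Mod k → Prop
  | 0, _ => False
  | k+1, C => ∃ D : ClauseT Atom Mod k, Sum.inr (b, m, D) ∈ C ∧ C' = ⟨k, D⟩

abbrev OccStep (Atom Mod : Type) := Bool × Mod × SClause Atom Mod

/-- The address of a clause occurrence in a formula: a top clause together with a
chain of modal-literal choices leading to the occurrence. -/
abbrev OccAddr (Atom Mod : Type) := SClause Atom Mod × List (OccStep Atom Mod)

def chainOK {Atom Mod : Type} : SClause Atom Mod → List (OccStep Atom Mod) → Prop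
  | _, [] => True
  | C, s :: rest => memModal s.1 s.2.1 s.2.2 C.1 C.2 ∧ chainOK s.2.2 rest

/-- The clause sitting at an occurrence address. -/
def occClause {Atom Mod : Type} : SClause Atom Mod → List (OccStep Atom Mod) → SClause Atom Mod
  | C, [] => C
  | _, s :: rest => occClause s.2.2 rest

/-- A valid occurrence of a clause in `φ`. -/
def validOcc {Atom Mod : Type} {n : ℕ} (φ : FormT Atom Mod n) (o : OccAddr Atom Mod) : Prop :=
  (∃ C ∈ φ, o.1 = (⟨n, C⟩ : SClause Atom Mod)) ∧ chainOK o.1 o.2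

/-- Colors: `none` is the color 0 of literal vertices, `some none` the color 1 of top
clauses, and `some (some (m, b))` the color `c(m, b)` of a clause occurring in a modal
literal of modality `m` and polarity `b` (this encoding is injective and avoids 0, 1). -/
abbrev GColor (Mod : Type) := Option (Option (Mod × Bool))

/-- The color of a clause occurrence. -/
def occColor {Atom Mod : Type} (o : OccAddr Atom Mod) : GColor Mod :=
  match o.2.getLast? with
  | none => some none
  | some s => some (some (s.2.1, s.1))

/-- Vertices of `G(φ)`: literal vertices and clause-occurrence vertices. -/
abbrev Vtx (Atom Mod : Type) := Lit Atom ⊕ OccAddr Atom Mod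

/-- The vertex set of `G(φ)`: literal vertices `a`, `¬a` for atoms `a` occurring in
`φ`, and one vertex for each clause occurrence of `φ`. -/
def isVertex {Atom Mod : Type} {n : ℕ} (φ : FormT Atom Mod n) : Vtx Atom Mod → Prop
  | Sum.inl l => atomOccurs φ l.atom
  | Sum.inr o => validOcc φ o

def vColor {Atom Mod : Type} : Vtx Atom Mod → GColor Mod
  | Sum.inl _ => none
  | Sum.inr o => occColor o

/-- The (undirected) edges of `G(φ)`: Boolean-consistency edges `a — ¬a`, edges from a
clause occurrence to the literals it directly contains, and edges from a clause
occurrence to the occurrences of the clauses of its modal literals. -/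
def GEdge {Atom Mod : Type} : Vtx Atom Mod → Vtx Atom Mod → Prop
  | Sum.inl l, Sum.inl l' => l' = l.flip
  | Sum.inr o, Sum.inl l => l ∈ topLits (occClause o.1 o.2).1 (occClause o.1 o.2).2
  | Sum.inl l, Sum.inr o => l ∈ topLits (occClause o.1 o.2).1 (occClause o.1 o.2).2
  | Sum.inr o, Sum.inr o' =>
      (∃ s, o'.1 = o.1 ∧ o'.2 = o.2 ++ [s]) ∨ (∃ s, o.1 = o'.1 ∧ o.2 = o'.2 ++ [s])

/-- A colored automorphism of `G(φ)`: a bijection of the vertex set preserving colors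
and preserving the edge relation in both directions. -/
structure ColoredAut {Atom Mod : Type} {n : ℕ} (φ : FormT Atom Mod n) where
  toEquiv : {v : Vtx Atom Mod // isVertex φ v} ≃ {v : Vtx Atom Mod // isVertex φ v}
  color_eq : ∀ v : {v : Vtx Atom Mod // isVertex φ v}, vColor (toEquiv v).1 = vColor v.1
  edge_iff : ∀ v w : {v : Vtx Atom Mod // isVertex φ v},
    GEdge (toEquiv v).1 (toEquiv w).1 ↔ GEdge v.1 w.1

set_option linter.unusedSectionVars false

section AuxLemmas

variable {Atom Mod : Type} [DecidableEq Atom] [DecidableEq Mod]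

theorem flip_atom (l : Lit Atom) : l.flip.atom = l.atom := by cases l <;> rfl

theorem flip_flip (l : Lit Atom) : l.flip.flip = l := by cases l <;> rfl

theorem permClause_comp (σ τ : Lit Atom → Lit Atom) :
    ∀ (k : ℕ) (C : ClauseT Atom Mod k),
      permClause τ k (permClause σ k C) = permClause (τ ∘ σ) k C
  | 0, C => by simp [permClause, Finset.image_image]
  | k+1, C => by
    simp only [permClause, Finset.image_image]
    refine Finset.image_congr ?_
    rintro (l | ⟨b, m, C'⟩) _
    · rfl
    · simp [Function.comp, permClause_comp σ τ k C']

theorem permClause_id :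
    ∀ (k : ℕ) (C : ClauseT Atom Mod k), permClause (id : Lit Atom → Lit Atom) k C = C
  | 0, C => Finset.image_id
  | k+1, C => by
    rw [show permClause (id : Lit Atom → Lit Atom) (k+1) C = C.image (fun e =>
        match e with
        | Sum.inl l => Sum.inl (id l)
        | Sum.inr (b, m, C') => Sum.inr (b, m, permClause id k C')) from rfl]
    have h : ∀ e ∈ C, (match e with
        | Sum.inl l => Sum.inl (id l)
        | Sum.inr (b, m, C') => Sum.inr (b, m, permClause id k C')) = id e := by
      rintro (l | ⟨b, m, C'⟩) _
      · rfl
      · simp [permClause_id k C']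
    rw [Finset.image_congr h, Finset.image_id]

theorem mem_topLits_perm (σ : Lit Atom → Lit Atom) :
    ∀ (k : ℕ) (C : ClauseT Atom Mod k) (l : Lit Atom),
      l ∈ topLits k (permClause σ k C) ↔ ∃ l0 ∈ topLits k C, σ l0 = l
  | 0, C, l => by simp [topLits, permClause]
  | k+1, C, l => by
    simp only [topLits, permClause, Set.mem_setOf_eq, Finset.mem_image]
    constructor
    · rintro ⟨e, he, heq⟩
      rcases e with l0 | ⟨b, m, C'⟩
      · exact ⟨l0, he, by simpa using heq⟩
      · simp at heq
    · rintro ⟨l0, hl0, rfl⟩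
      exact ⟨Sum.inl l0, hl0, rfl⟩

theorem memModal_perm_fwd (σ : Lit Atom → Lit Atom) (b : Bool) (m : Mod) :
    ∀ (k : ℕ) (C : ClauseT Atom Mod k) (D : SClause Atom Mod),
      memModal b m D k C → memModal b m (permSClause σ D) k (permClause σ k C)
  | 0, C, D, h => h.elim
  | k+1, C, D, h => by
    obtain ⟨E, hE, rfl⟩ := h
    exact ⟨permClause σ k E, Finset.mem_image.2 ⟨Sum.inr (b, m, E), hE, rfl⟩, rfl⟩

theorem memModal_perm (σ : Lit Atom → Lit Atom) (b : Bool) (m : Mod) :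
    ∀ (k : ℕ) (C : ClauseT Atom Mod k) (D : SClause Atom Mod),
      memModal b m D k (permClause σ k C) ↔
        ∃ D0, memModal b m D0 k C ∧ D = permSClause σ D0
  | 0, C, D => by simp [memModal]
  | k+1, C, D => by
    constructor
    · rintro ⟨E, hE, rfl⟩
      rw [permClause] at hE
      obtain ⟨e, he, heq⟩ := Finset.mem_image.1 hE
      rcases e with l | ⟨b', m', C'⟩
      · simp at heq
      · simp only [Sum.inr.injEq, Prod.mk.injEq] at heq
        obtain ⟨hb, hm, hC⟩ := heq
        subst hb; subst hm
        exact ⟨⟨k, C'⟩, ⟨C', he, rfl⟩, by simp [permSClause, hC]⟩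
    · rintro ⟨D0, hD0, rfl⟩
      exact memModal_perm_fwd σ b m (k+1) C D0 hD0

theorem mem_litsIn_perm (σ : Lit Atom → Lit Atom) :
    ∀ (k : ℕ) (C : ClauseT Atom Mod k) (l : Lit Atom),
      l ∈ litsIn k C → σ l ∈ litsIn k (permClause σ k C)
  | 0, C, l, h => by
    simpa [litsIn, permClause] using Finset.mem_image_of_mem σ h
  | k+1, C, l, h => by
    rcases h with h | ⟨b, m, C', hC', hl⟩
    · exact Or.inl (Finset.mem_image.2 ⟨Sum.inl l, h, rfl⟩)
    · exact Or.inr ⟨b, m, permClause σ k C',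
        Finset.mem_image.2 ⟨Sum.inr (b, m, C'), hC', rfl⟩,
        mem_litsIn_perm σ k C' l hl⟩

theorem topLits_subset_litsIn :
    ∀ (k : ℕ) (C : ClauseT Atom Mod k) (l : Lit Atom), l ∈ topLits k C → l ∈ litsIn k C
  | 0, _, _, h => h
  | _+1, _, _, h => Or.inl h

theorem memModal_litsIn :
    ∀ (k : ℕ) (C : ClauseT Atom Mod k) (b : Bool) (m : Mod) (D : SClause Atom Mod),
      memModal b m D k C → ∀ l, l ∈ litsIn D.1 D.2 → l ∈ litsIn k C
  | 0, _, _, _, _, h => h.elim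
  | k+1, C, b, m, D, h => by
    obtain ⟨E, hE, rfl⟩ := h
    exact fun l hl => Or.inr ⟨b, m, E, hE, hl⟩

theorem occClause_append :
    ∀ (xs : List (OccStep Atom Mod)) (C : SClause Atom Mod) (s : OccStep Atom Mod),
      occClause C (xs ++ [s]) = s.2.2
  | [], C, s => rfl
  | x :: xs, C, s => occClause_append xs x.2.2 s

theorem chainOK_append :
    ∀ (xs : List (OccStep Atom Mod)) (C : SClause Atom Mod) (s : OccStep Atom Mod),
      chainOK C (xs ++ [s]) ↔
        chainOK C xs ∧ memModal s.1 s.2.1 s.2.2 (occClause C xs).1 (occClause C xs).2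
  | [], C, s => by simp [chainOK, occClause]
  | x :: xs, C, s => by
    show (memModal x.1 x.2.1 x.2.2 C.1 C.2 ∧ chainOK x.2.2 (xs ++ [s])) ↔
      (memModal x.1 x.2.1 x.2.2 C.1 C.2 ∧ chainOK x.2.2 xs) ∧ _
    rw [chainOK_append xs x.2.2 s]
    tauto

theorem memModal_fst :
    ∀ (k : ℕ) (C : ClauseT Atom Mod k) (b : Bool) (m : Mod) (D : SClause Atom Mod),
      memModal b m D k C → D.1 + 1 = k
  | 0, _, _, _, _, h => h.elim
  | k+1, C, b, m, D, h => by obtain ⟨E, _, rfl⟩ := h; rfl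

theorem occClause_fst :
    ∀ (xs : List (OccStep Atom Mod)) (C : SClause Atom Mod), chainOK C xs →
      (occClause C xs).1 + xs.length = C.1
  | [], C, _ => by simp [occClause]
  | x :: xs, C, h => by
    have h1 := memModal_fst C.1 C.2 x.1 x.2.1 x.2.2 h.1
    have h2 := occClause_fst xs x.2.2 h.2
    simp only [occClause, List.length_cons]
    omega

theorem chainOK_litsIn :
    ∀ (xs : List (OccStep Atom Mod)) (C : SClause Atom Mod), chainOK C xs →
      ∀ l, l ∈ litsIn (occClause C xs).1 (occClause C xs).2 → l ∈ litsIn C.1 C.2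
  | [], C, _, l, hl => hl
  | x :: xs, C, h, l, hl =>
    memModal_litsIn C.1 C.2 x.1 x.2.1 x.2.2 h.1 l
      (chainOK_litsIn xs x.2.2 h.2 l hl)

theorem atomOccurs_of_litsIn {n : ℕ} {φ : FormT Atom Mod n} {l : Lit Atom}
    (h : ∃ C ∈ φ, l ∈ litsIn n C) : atomOccurs φ l.atom := by
  cases l with
  | pos a => exact Or.inl h
  | neg a => exact Or.inr h

theorem atomOccurs_iff {n : ℕ} {φ : FormT Atom Mod n} (l : Lit Atom) :
    atomOccurs φ l.atom ↔ (∃ C ∈ φ, l ∈ litsIn n C) ∨ (∃ C ∈ φ, l.flip ∈ litsIn n C) := by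
  cases l with
  | pos a => rfl
  | neg a => exact Or.comm

/-- A literal appearing at the top of the clause of a valid occurrence occurs in `φ`. -/
theorem atomOccurs_of_topLits {n : ℕ} {φ : FormT Atom Mod n} {o : OccAddr Atom Mod}
    (ho : validOcc φ o) {l : Lit Atom}
    (hl : l ∈ topLits (occClause o.1 o.2).1 (occClause o.1 o.2).2) :
    atomOccurs φ l.atom := by
  obtain ⟨⟨C, hC, hCeq⟩, hchain⟩ := ho
  refine atomOccurs_of_litsIn ⟨C, hC, ?_⟩
  have h1 := chainOK_litsIn o.2 o.1 hchain l
    (topLits_subset_litsIn _ _ l hl)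
  rw [hCeq] at h1
  exact h1

/-- The valid occurrence obtained by descending into a modal literal. -/
theorem validOcc_append {n : ℕ} {φ : FormT Atom Mod n} {o : OccAddr Atom Mod}
    (ho : validOcc φ o) (s : OccStep Atom Mod)
    (hs : memModal s.1 s.2.1 s.2.2 (occClause o.1 o.2).1 (occClause o.1 o.2).2) :
    validOcc φ (o.1, o.2 ++ [s]) :=
  ⟨ho.1, (chainOK_append o.2 o.1 s).2 ⟨ho.2, hs⟩⟩

theorem occColor_eq_top_iff (o : OccAddr Atom Mod) :
    occColor o = some none ↔ o.2 = [] := by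
  unfold occColor
  rcases h : o.2.getLast? with _ | s
  · simpa using List.getLast?_eq_none_iff.1 h
  · have hne : o.2 ≠ [] := by intro he; rw [he] at h; simp at h
    simp [hne]

/-- Action of a literal permutation on occurrence steps. -/
def mapStep (σ : Lit Atom → Lit Atom) (s : OccStep Atom Mod) : OccStep Atom Mod :=
  (s.1, s.2.1, permSClause σ s.2.2)

/-- Action of a literal permutation on occurrence addresses. -/
def mapOcc (σ : Lit Atom → Lit Atom) (o : OccAddr Atom Mod) : OccAddr Atom Mod :=
  (permSClause σ o.1, o.2.map (mapStep σ))

theorem permSClause_comp (σ τ : Lit Atom → Lit Atom) (C : SClause Atom Mod) :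
    permSClause τ (permSClause σ C) = permSClause (τ ∘ σ) C := by
  unfold permSClause
  exact congrArg (Sigma.mk C.1) (permClause_comp σ τ C.1 C.2)

theorem permSClause_id (C : SClause Atom Mod) :
    permSClause (id : Lit Atom → Lit Atom) C = C := by
  unfold permSClause
  conv_rhs => rw [show C = ⟨C.1, C.2⟩ from rfl]
  exact congrArg (Sigma.mk C.1) (permClause_id C.1 C.2)

theorem mapOcc_comp (σ τ : Lit Atom → Lit Atom) (o : OccAddr Atom Mod) :
    mapOcc τ (mapOcc σ o) = mapOcc (τ ∘ σ) o := by
  unfold mapOcc mapStep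
  rw [List.map_map]
  refine Prod.ext (permSClause_comp σ τ o.1) ?_
  simp only
  refine List.map_congr_left ?_
  intro s _
  simp [Function.comp, permSClause_comp]

theorem mapOcc_id (o : OccAddr Atom Mod) : mapOcc (id : Lit Atom → Lit Atom) o = o := by
  unfold mapOcc mapStep
  refine Prod.ext (permSClause_id o.1) ?_
  simp only
  rw [show o.2.map (fun s : OccStep Atom Mod => (s.1, s.2.1, permSClause id s.2.2))
      = o.2.map _root_.id from List.map_congr_left fun s _ => by simp [permSClause_id],
    List.map_id]

theorem occClause_mapOcc (σ : Lit Atom → Lit Atom) :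
    ∀ (xs : List (OccStep Atom Mod)) (C : SClause Atom Mod),
      occClause (permSClause σ C) (xs.map (mapStep σ)) = permSClause σ (occClause C xs)
  | [], C => rfl
  | x :: xs, C => occClause_mapOcc σ xs x.2.2

theorem chainOK_mapOcc (σ : Lit Atom → Lit Atom) :
    ∀ (xs : List (OccStep Atom Mod)) (C : SClause Atom Mod),
      chainOK C xs → chainOK (permSClause σ C) (xs.map (mapStep σ))
  | [], C, _ => trivial
  | x :: xs, C, h =>
    ⟨memModal_perm_fwd σ x.1 x.2.1 C.1 C.2 x.2.2 h.1, chainOK_mapOcc σ xs x.2.2 h.2⟩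

theorem occColor_mapOcc (σ : Lit Atom → Lit Atom) (o : OccAddr Atom Mod) :
    occColor (mapOcc σ o) = occColor o := by
  unfold occColor mapOcc
  rw [List.getLast?_map]
  cases o.2.getLast? <;> rfl

/-- `mapOcc` preserves valid occurrences when `σ` is a symmetry of `φ`. -/
theorem validOcc_mapOcc {n : ℕ} {φ : FormT Atom Mod n} (σ : Lit Atom → Lit Atom)
    (hsym : permForm σ φ = φ) {o : OccAddr Atom Mod} (ho : validOcc φ o) :
    validOcc φ (mapOcc σ o) := by
  obtain ⟨⟨C, hC, hCeq⟩, hchain⟩ := ho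
  refine ⟨⟨permClause σ n C, ?_, by show permSClause σ o.1 = _; rw [hCeq]; rfl⟩, chainOK_mapOcc σ o.2 o.1 hchain⟩
  rw [← hsym]
  exact Finset.mem_image_of_mem _ hC

theorem atomOccurs_perm {n : ℕ} {φ : FormT Atom Mod n} {σ : Lit Atom → Lit Atom}
    (hcons : Consistent σ) (hsym : permForm σ φ = φ) {l : Lit Atom}
    (h : atomOccurs φ l.atom) : atomOccurs φ (σ l).atom := by
  rw [atomOccurs_iff] at h ⊢
  have hmem : ∀ C ∈ φ, permClause σ n C ∈ φ := fun C hC => by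
    rw [← hsym]; exact Finset.mem_image_of_mem _ hC
  rcases h with ⟨C, hC, hl⟩ | ⟨C, hC, hl⟩
  · exact Or.inl ⟨permClause σ n C, hmem C hC, mem_litsIn_perm σ n C l hl⟩
  · refine Or.inr ⟨permClause σ n C, hmem C hC, ?_⟩
    rw [← hcons l]
    exact mem_litsIn_perm σ n C l.flip hl

end AuxLemmas

section AutAux

variable {Atom Mod : Type} [DecidableEq Atom] [DecidableEq Mod] {n : ℕ} {φ : FormT Atom Mod n}

/-- The inverse of a colored automorphism. -/
def ColoredAut.symm (π : ColoredAut φ) : ColoredAut φ where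
  toEquiv := π.toEquiv.symm
  color_eq v := by
    conv_rhs => rw [← Equiv.apply_symm_apply π.toEquiv v]
    exact (π.color_eq (π.toEquiv.symm v)).symm
  edge_iff v w := by
    conv_rhs => rw [← Equiv.apply_symm_apply π.toEquiv v, ← Equiv.apply_symm_apply π.toEquiv w]
    exact (π.edge_iff (π.toEquiv.symm v) (π.toEquiv.symm w)).symm

theorem ColoredAut.symm_toEquiv (π : ColoredAut φ) : π.symm.toEquiv = π.toEquiv.symm := rfl

/-- Extract the literal from a literal vertex. -/
def litOf : Vtx Atom Mod → Option (Lit Atom)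
  | Sum.inl l => some l
  | Sum.inr _ => none

open Classical in
/-- The literal permutation induced by a colored automorphism (identity on
literals not occurring in `φ`). -/
noncomputable def autLit (π : ColoredAut φ) (l : Lit Atom) : Lit Atom :=
  if h : atomOccurs φ l.atom then (litOf (π.toEquiv ⟨Sum.inl l, h⟩).1).getD l else l

theorem exists_inl (π : ColoredAut φ) (l : Lit Atom) (h : isVertex φ (Sum.inl l)) :
    ∃ l', (π.toEquiv ⟨Sum.inl l, h⟩).1 = Sum.inl l' := by
  have hc := π.color_eq ⟨Sum.inl l, h⟩
  rcases hv : (π.toEquiv ⟨Sum.inl l, h⟩).1 with l' | o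
  · exact ⟨l', rfl⟩
  · rw [hv] at hc
    exfalso
    have h2 : occColor o = none := hc
    unfold occColor at h2
    rcases hg : o.2.getLast? with _ | s <;> rw [hg] at h2 <;> simp at h2

theorem autLit_spec (π : ColoredAut φ) (l : Lit Atom) (h : isVertex φ (Sum.inl l)) :
    (π.toEquiv ⟨Sum.inl l, h⟩).1 = Sum.inl (autLit π l) := by
  obtain ⟨l', hl'⟩ := exists_inl π l h
  have h2 : autLit π l = l' := by unfold autLit; rw [dif_pos (show atomOccurs φ l.atom from h), hl']; rfl
  rw [hl', h2]

theorem autLit_not_occurs (π : ColoredAut φ) (l : Lit Atom) (h : ¬ atomOccurs φ l.atom) :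
    autLit π l = l := by unfold autLit; rw [dif_neg h]

theorem autLit_occurs (π : ColoredAut φ) (l : Lit Atom) (h : atomOccurs φ l.atom) :
    atomOccurs φ (autLit π l).atom := by
  have hv := (π.toEquiv ⟨Sum.inl l, h⟩).2
  rw [autLit_spec π l h] at hv
  exact hv

theorem autLit_symm_autLit (π : ColoredAut φ) (l : Lit Atom) :
    autLit π.symm (autLit π l) = l := by
  by_cases h : atomOccurs φ l.atom
  · have h2 := autLit_occurs π l h
    have := autLit_spec π.symm (autLit π l) h2
    rw [ColoredAut.symm_toEquiv] at this
    have heq : (⟨Sum.inl (autLit π l), h2⟩ : {v : Vtx Atom Mod // isVertex φ v})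
        = π.toEquiv ⟨Sum.inl l, h⟩ := Subtype.ext (autLit_spec π l h).symm
    rw [heq, Equiv.symm_apply_apply] at this
    exact (Sum.inl.inj this).symm
  · rw [autLit_not_occurs π l h, autLit_not_occurs π.symm l h]

theorem autLit_autLit_symm (π : ColoredAut φ) (l : Lit Atom) :
    autLit π (autLit π.symm l) = l := by
  have := autLit_symm_autLit π.symm l
  rwa [show π.symm.symm = π from by cases π; rfl] at this

theorem autLit_bijective (π : ColoredAut φ) : Function.Bijective (autLit π) :=
  Function.bijective_iff_has_inverse.2
    ⟨autLit π.symm, autLit_symm_autLit π, autLit_autLit_symm π⟩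

theorem autLit_consistent (π : ColoredAut φ) : Consistent (autLit (φ := φ) π) := by
  intro l
  by_cases h : atomOccurs φ l.atom
  · have hf : atomOccurs φ l.flip.atom := by rwa [flip_atom]
    have hocc1 := autLit_occurs π l h
    have key := (π.edge_iff ⟨Sum.inl l, h⟩ ⟨Sum.inl l.flip, hf⟩).2 (by exact rfl)
    rw [autLit_spec π l h, autLit_spec π l.flip hf] at key
    exact key
  · have hf : ¬ atomOccurs φ l.flip.atom := by rwa [flip_atom]
    rw [autLit_not_occurs π l h, autLit_not_occurs π l.flip hf]

theorem exists_inr (π : ColoredAut φ) (o : OccAddr Atom Mod) (h : isVertex φ (Sum.inr o)) :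
    ∃ o', (π.toEquiv ⟨Sum.inr o, h⟩).1 = Sum.inr o' ∧ occColor o' = occColor o := by
  have hc := π.color_eq ⟨Sum.inr o, h⟩
  rcases hv : (π.toEquiv ⟨Sum.inr o, h⟩).1 with l' | o'
  · rw [hv] at hc
    exfalso
    have h2 : occColor o = none := hc.symm
    unfold occColor at h2
    rcases hg : o.2.getLast? with _ | s <;> rw [hg] at h2 <;> simp at h2
  · rw [hv] at hc
    exact ⟨o', rfl, hc⟩

theorem ColoredAut.ext' {π₁ π₂ : ColoredAut φ} (h : π₁.toEquiv = π₂.toEquiv) : π₁ = π₂ := by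
  cases π₁; cases π₂; cases h; rfl

theorem ColoredAut.symm_symm (π : ColoredAut φ) : π.symm.symm = π := by cases π; rfl

theorem len_step (π ρ : ColoredAut φ) (hρ : ρ.toEquiv = π.toEquiv.symm) (j : ℕ)
    (IH : ∀ j' : ℕ, j' < j + 1 → ∀ (o : OccAddr Atom Mod) (h : isVertex φ (Sum.inr o)),
      o.2.length = j' →
      (∃ o', (π.toEquiv ⟨Sum.inr o, h⟩).1 = Sum.inr o' ∧ o'.2.length = j') ∧
      (∃ o', (ρ.toEquiv ⟨Sum.inr o, h⟩).1 = Sum.inr o' ∧ o'.2.length = j')) :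
    ∀ (o : OccAddr Atom Mod) (h : isVertex φ (Sum.inr o)), o.2.length = j + 1 →
      ∃ o', (π.toEquiv ⟨Sum.inr o, h⟩).1 = Sum.inr o' ∧ o'.2.length = j + 1 := by
  intro o h hlen
  have hne : o.2 ≠ [] := by intro he; rw [he] at hlen; simp at hlen
  set s := o.2.getLast hne with hs
  have hsplit : o.2.dropLast ++ [s] = o.2 := List.dropLast_append_getLast hne
  have hlend : o.2.dropLast.length = j := by
    have : o.2.dropLast.length = o.2.length - 1 := List.length_dropLast
    omega
  have hparv : isVertex φ (Sum.inr (o.1, o.2.dropLast)) := by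
    obtain ⟨htop, hchain⟩ := (h : validOcc φ o)
    refine ⟨htop, ?_⟩
    rw [← hsplit] at hchain
    exact ((chainOK_append o.2.dropLast o.1 s).1 hchain).1
  obtain ⟨⟨p', hp', hlenp⟩, -⟩ := IH j (by omega) (o.1, o.2.dropLast) hparv hlend
  obtain ⟨q', hq', -⟩ := exists_inr π o h
  have hedge : GEdge (Sum.inr (o.1, o.2.dropLast) : Vtx Atom Mod) (Sum.inr o) :=
    Or.inl ⟨s, rfl, hsplit.symm⟩
  have hedge' := (π.edge_iff ⟨Sum.inr (o.1, o.2.dropLast), hparv⟩ ⟨Sum.inr o, h⟩).2 hedge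
  rw [hp', hq'] at hedge'
  rcases hedge' with ⟨s', _, h2⟩ | ⟨s', _, h2⟩
  · refine ⟨q', hq', ?_⟩
    rw [h2, List.length_append]
    simp [hlenp]
  · exfalso
    have hlq : q'.2.length + 1 = j := by
      have := congrArg List.length h2
      rw [List.length_append] at this
      simp at this
      omega
    have hq'v : isVertex φ (Sum.inr q') := by
      rw [← hq']; exact (π.toEquiv ⟨Sum.inr o, h⟩).2
    obtain ⟨-, o'', ho'', hlo''⟩ := IH q'.2.length (by omega) q' hq'v rfl
    have hxeq : (⟨Sum.inr q', hq'v⟩ : {v : Vtx Atom Mod // isVertex φ v})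
        = π.toEquiv ⟨Sum.inr o, h⟩ := Subtype.ext hq'.symm
    rw [hxeq, hρ, Equiv.symm_apply_apply] at ho''
    have : o = o'' := by exact Sum.inr.inj ho''
    rw [← this] at hlo''
    omega

theorem len_pres (π ρ : ColoredAut φ) (hρ : ρ.toEquiv = π.toEquiv.symm) :
    ∀ (j : ℕ) (o : OccAddr Atom Mod) (h : isVertex φ (Sum.inr o)), o.2.length = j →
      (∃ o', (π.toEquiv ⟨Sum.inr o, h⟩).1 = Sum.inr o' ∧ o'.2.length = j) ∧
      (∃ o', (ρ.toEquiv ⟨Sum.inr o, h⟩).1 = Sum.inr o' ∧ o'.2.length = j) := by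
  intro j
  induction j using Nat.strong_induction_on with
  | _ j IH =>
    have hρ' : π.toEquiv = ρ.toEquiv.symm := by rw [hρ, Equiv.symm_symm]
    match j with
    | 0 =>
      intro o h hlen
      have ho : o.2 = [] := List.length_eq_zero_iff.1 hlen
      constructor
      · obtain ⟨o', ho', hc⟩ := exists_inr π o h
        refine ⟨o', ho', ?_⟩
        have : o'.2 = [] := (occColor_eq_top_iff o').1 (by
          rw [hc, (occColor_eq_top_iff o).2 ho])
        simp [this]
      · obtain ⟨o', ho', hc⟩ := exists_inr ρ o h
        refine ⟨o', ho', ?_⟩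
        have : o'.2 = [] := (occColor_eq_top_iff o').1 (by
          rw [hc, (occColor_eq_top_iff o).2 ho])
        simp [this]
    | j + 1 =>
      intro o h hlen
      exact ⟨len_step π ρ hρ j IH o h hlen,
        len_step ρ π hρ' j (fun j' hj' o h hl => ⟨(IH j' hj' o h hl).2, (IH j' hj' o h hl).1⟩)
          o h hlen⟩

/-- The image of a child occurrence is a child of the image, with matching
modality and polarity. -/
theorem child_map (π ρ : ColoredAut φ) (hρ : ρ.toEquiv = π.toEquiv.symm)
    (o : OccAddr Atom Mod) (h : isVertex φ (Sum.inr o)) (s : OccStep Atom Mod)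
    (hc : isVertex φ (Sum.inr (o.1, o.2 ++ [s])))
    (p' : OccAddr Atom Mod) (hp' : (π.toEquiv ⟨Sum.inr o, h⟩).1 = Sum.inr p') :
    ∃ q' s', (π.toEquiv ⟨Sum.inr (o.1, o.2 ++ [s]), hc⟩).1 = Sum.inr q' ∧
      q'.1 = p'.1 ∧ q'.2 = p'.2 ++ [s'] ∧ s'.1 = s.1 ∧ s'.2.1 = s.2.1 := by
  obtain ⟨⟨p'', hp'', hlenp⟩, -⟩ := len_pres π ρ hρ o.2.length o h rfl
  rw [hp'] at hp''
  obtain rfl : p' = p'' := Sum.inr.inj hp''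
  obtain ⟨⟨q'', hq'', hlenq⟩, -⟩ :=
    len_pres π ρ hρ (o.2 ++ [s]).length (o.1, o.2 ++ [s]) hc rfl
  obtain ⟨q', hq', hcol⟩ := exists_inr π (o.1, o.2 ++ [s]) hc
  rw [hq'] at hq''
  obtain rfl : q' = q'' := Sum.inr.inj hq''
  have hedge : GEdge (Sum.inr o : Vtx Atom Mod) (Sum.inr (o.1, o.2 ++ [s])) :=
    Or.inl ⟨s, rfl, rfl⟩
  have hedge' := (π.edge_iff ⟨Sum.inr o, h⟩ ⟨Sum.inr (o.1, o.2 ++ [s]), hc⟩).2 hedge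
  rw [hp', hq'] at hedge'
  rcases hedge' with ⟨s', h1, h2⟩ | ⟨s', h1, h2⟩
  · -- q' is a child of p'
    refine ⟨q', s', hq', h1, h2, ?_, ?_⟩ <;>
    · have hcq : occColor q' = some (some (s'.2.1, s'.1)) := by
        unfold occColor
        rw [h2, List.getLast?_concat]
      have hco : occColor (o.1, o.2 ++ [s]) = some (some (s.2.1, s.1)) := by
        unfold occColor
        rw [show (o.1, o.2 ++ [s]).2 = o.2 ++ [s] from rfl, List.getLast?_concat]
      rw [hcq, hco] at hcol
      have := Option.some.inj (Option.some.inj hcol)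
      rw [Prod.mk.injEq] at this
      tauto
  · exfalso
    have := congrArg List.length h2
    rw [List.length_append] at this
    simp only [List.length_append, List.length_singleton] at hlenq
    omega

theorem validOcc_image (π : ColoredAut φ) (o : OccAddr Atom Mod)
    (h : isVertex φ (Sum.inr o)) (o' : OccAddr Atom Mod)
    (h2 : (π.toEquiv ⟨Sum.inr o, h⟩).1 = Sum.inr o') : validOcc φ o' := by
  have := (π.toEquiv ⟨Sum.inr o, h⟩).2
  rw [h2] at this
  exact this

/-- The literals at the top of the image clause are exactly the `autLit π`-images of
those of the original clause. -/
theorem topLits_map (π ρ : ColoredAut φ) (hρ : ρ = π.symm)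
    (o : OccAddr Atom Mod) (h : isVertex φ (Sum.inr o)) (o' : OccAddr Atom Mod)
    (h2 : (π.toEquiv ⟨Sum.inr o, h⟩).1 = Sum.inr o') (l : Lit Atom) :
    l ∈ topLits (occClause o'.1 o'.2).1 (occClause o'.1 o'.2).2 ↔
      ∃ l0 ∈ topLits (occClause o.1 o.2).1 (occClause o.1 o.2).2, autLit π l0 = l := by
  have ho' : validOcc φ o' := validOcc_image π o h o' h2
  constructor
  · intro hl
    have hv : atomOccurs φ l.atom := atomOccurs_of_topLits ho' hl
    have hveq := autLit_spec ρ l hv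
    have hback : π.toEquiv (ρ.toEquiv ⟨Sum.inl l, hv⟩) = ⟨Sum.inl l, hv⟩ := by
      rw [hρ, ColoredAut.symm_toEquiv, Equiv.apply_symm_apply]
    have hedge := (π.edge_iff (ρ.toEquiv ⟨Sum.inl l, hv⟩) ⟨Sum.inr o, h⟩).1 (by
      rw [hback, h2]
      exact hl)
    rw [hveq] at hedge
    refine ⟨autLit ρ l, hedge, ?_⟩
    rw [hρ]
    exact autLit_autLit_symm π l
  · rintro ⟨l0, hl0, rfl⟩
    have hv0 : atomOccurs φ l0.atom := atomOccurs_of_topLits (h : validOcc φ o) hl0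
    have hedge := (π.edge_iff ⟨Sum.inl l0, hv0⟩ ⟨Sum.inr o, h⟩).2 hl0
    rw [autLit_spec π l0 hv0, h2] at hedge
    exact hedge

/-- Statement of the clause-mapping property at clause depth `k`. -/
def ClStmt (π : ColoredAut φ) (k : ℕ) : Prop :=
  ∀ (o : OccAddr Atom Mod) (h : isVertex φ (Sum.inr o)),
    (occClause o.1 o.2).1 = k → ∀ o', (π.toEquiv ⟨Sum.inr o, h⟩).1 = Sum.inr o' →
      occClause o'.1 o'.2 = permSClause (autLit π) (occClause o.1 o.2)

theorem occClause_image_fst (π ρ : ColoredAut φ) (hρ : ρ = π.symm)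
    (o : OccAddr Atom Mod) (h : isVertex φ (Sum.inr o)) (o' : OccAddr Atom Mod)
    (h2 : (π.toEquiv ⟨Sum.inr o, h⟩).1 = Sum.inr o') :
    (occClause o'.1 o'.2).1 = (occClause o.1 o.2).1 := by
  have ho' : validOcc φ o' := validOcc_image π o h o' h2
  have hvo : validOcc φ o := h
  obtain ⟨⟨C, hC, hCeq⟩, hchain⟩ := hvo
  obtain ⟨⟨C', hC', hCeq'⟩, hchain'⟩ := ho'
  obtain ⟨⟨o'', ho'', hlen⟩, -⟩ :=
    len_pres π ρ (by rw [hρ]; rfl) o.2.length o h rfl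
  rw [h2] at ho''
  obtain rfl : o' = o'' := Sum.inr.inj ho''
  have e1 := occClause_fst o.2 o.1 hchain
  have e2 := occClause_fst o'.2 o'.1 hchain'
  have f1 : o.1.1 = n := by rw [hCeq]
  have f2 : o'.1.1 = n := by rw [hCeq']
  omega

theorem clause_base (π ρ : ColoredAut φ) (hρ : ρ = π.symm) : ClStmt π 0 := by
  intro o h hk o' h2
  have hk' : (occClause o'.1 o'.2).1 = 0 := by
    rw [occClause_image_fst π ρ hρ o h o' h2, hk]
  rcases hC : occClause o.1 o.2 with ⟨k0, C⟩
  rcases hC' : occClause o'.1 o'.2 with ⟨k0', C'⟩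
  rw [hC] at hk; rw [hC'] at hk'
  dsimp at hk hk'
  subst hk; subst hk'
  refine congrArg (Sigma.mk 0) (Finset.ext fun l => ?_)
  have hmap := topLits_map π ρ hρ o h o' h2 l
  rw [hC, hC'] at hmap
  rw [show (l ∈ permClause (autLit π) 0 C) ↔ ∃ l0 ∈ C, autLit π l0 = l from
    Finset.mem_image]
  exact hmap

theorem clause_step (π ρ : ColoredAut φ) (hρ : ρ = π.symm) (k : ℕ)
    (IHπ : ClStmt π k) (IHρ : ClStmt ρ k) : ClStmt π (k + 1) := by
  intro o h hk o' h2
  have hρe : ρ.toEquiv = π.toEquiv.symm := by rw [hρ]; rfl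
  have hπe : π.toEquiv = ρ.toEquiv.symm := by rw [hρe, Equiv.symm_symm]
  have hπρ : π = ρ.symm := ColoredAut.ext' hπe
  have hσσ' : ∀ l, autLit π (autLit ρ l) = l := by
    intro l; rw [hρ]; exact autLit_autLit_symm π l
  have hk' : (occClause o'.1 o'.2).1 = k + 1 := by
    rw [occClause_image_fst π ρ hρ o h o' h2, hk]
  have ho' : validOcc φ o' := validOcc_image π o h o' h2
  have hback : (⟨Sum.inr o', validOcc_image π o h o' h2⟩ :
      {v : Vtx Atom Mod // isVertex φ v}) = π.toEquiv ⟨Sum.inr o, h⟩ :=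
    Subtype.ext h2.symm
  rcases hC : occClause o.1 o.2 with ⟨k0, C⟩
  rcases hC' : occClause o'.1 o'.2 with ⟨k0', C'⟩
  rw [hC] at hk; rw [hC'] at hk'
  dsimp at hk hk'
  subst hk; subst hk'
  refine congrArg (Sigma.mk (k+1)) (Finset.ext fun e => ?_)
  rw [show (e ∈ permClause (autLit π) (k+1) C) ↔
      ∃ e0 ∈ C, (match e0 with
        | Sum.inl l => Sum.inl (autLit π l)
        | Sum.inr (b, m, D) => Sum.inr (b, m, permClause (autLit π) k D)) = e from
    Finset.mem_image]
  rcases e with l | ⟨b, m, E⟩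
  · -- literal elements: via topLits_map
    have hmap := topLits_map π ρ hρ o h o' h2 l
    rw [hC, hC'] at hmap
    have hmap' : (Sum.inl l ∈ C') ↔ ∃ l0, Sum.inl l0 ∈ C ∧ autLit π l0 = l := by
      exact hmap
    rw [hmap']
    constructor
    · rintro ⟨l0, hl0, rfl⟩
      exact ⟨Sum.inl l0, hl0, rfl⟩
    · rintro ⟨e0, he0, heq⟩
      rcases e0 with l0 | ⟨b, m, D⟩
      · simp only [Sum.inl.injEq] at heq
        exact ⟨l0, he0, heq⟩
      · simp at heq
    -- modal elements
  · constructor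
    · -- from C' to C, via ρ
      intro hE
      have hmem : memModal b m ⟨k, E⟩ (occClause o'.1 o'.2).1 (occClause o'.1 o'.2).2 := by
        rw [hC']; exact ⟨E, hE, rfl⟩
      have hcv : isVertex φ (Sum.inr (o'.1, o'.2 ++ [(b, m, ⟨k, E⟩)])) :=
        validOcc_append ho' _ hmem
      obtain ⟨q, s', hq, hq1, hq2, hs1, hs2⟩ :=
        child_map ρ π (by rw [hπρ]; rfl) o' (validOcc_image π o h o' h2)
          (b, m, ⟨k, E⟩) hcv o (by rw [hback, hρe, Equiv.symm_apply_apply])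
      -- q = (o.1, o.2 ++ [s']) is a child of o
      have hqeq : q = (o.1, o.2 ++ [s']) := Prod.ext hq1 hq2
      have hqv : validOcc φ q := by
        have := (ρ.toEquiv ⟨Sum.inr (o'.1, o'.2 ++ [(b, m, ⟨k, E⟩)]), hcv⟩).2
        rw [hq] at this
        exact this
      have hmem2 : memModal s'.1 s'.2.1 s'.2.2 (occClause o.1 o.2).1 (occClause o.1 o.2).2 := by
        have := hqv.2
        rw [hqeq] at this
        exact ((chainOK_append o.2 o.1 s').1 this).2
      rw [hC] at hmem2
      obtain ⟨D, hD, hDeq⟩ := hmem2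
      dsimp only at hD
      -- apply IHρ to the child occurrence of o'
      have hidx : (occClause (o'.1, o'.2 ++ [(b, m, (⟨k, E⟩ : SClause Atom Mod))]).1
          (o'.1, o'.2 ++ [(b, m, (⟨k, E⟩ : SClause Atom Mod))]).2).1 = k := by
        rw [show (o'.1, o'.2 ++ [(b, m, (⟨k, E⟩ : SClause Atom Mod))]).2
            = o'.2 ++ [(b, m, (⟨k, E⟩ : SClause Atom Mod))] from rfl,
          occClause_append]
      have hIH := IHρ (o'.1, o'.2 ++ [(b, m, ⟨k, E⟩)]) hcv hidx q hq
      rw [show (occClause (o'.1, o'.2 ++ [(b, m, (⟨k, E⟩ : SClause Atom Mod))]).1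
            (o'.1, o'.2 ++ [(b, m, (⟨k, E⟩ : SClause Atom Mod))]).2)
          = (⟨k, E⟩ : SClause Atom Mod) from occClause_append _ _ _] at hIH
      have hocq : occClause q.1 q.2 = s'.2.2 := by
        rw [hqeq]; exact occClause_append _ _ _
      rw [hocq, hDeq] at hIH
      -- hIH : ⟨k, D⟩ = permSClause (autLit ρ) ⟨k, E⟩
      have hD2 : D = permClause (autLit ρ) k E := by
        have h' : (⟨k, D⟩ : SClause Atom Mod) = ⟨k, permClause (autLit ρ) k E⟩ := hIH
        exact eq_of_heq (Sigma.mk.inj_iff.1 h').2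
      refine ⟨Sum.inr (b, m, D), ?_, ?_⟩
      · have hb : b = s'.1 := hs1.symm
        have hm : m = s'.2.1 := hs2.symm
        rw [hb, hm]
        exact hD
      · show Sum.inr (b, m, permClause (autLit π) k D)
            = (Sum.inr (b, m, E) : Lit Atom ⊕ Bool × Mod × ClauseT Atom Mod k)
        rw [hD2, permClause_comp,
          show (autLit π ∘ autLit ρ) = id from funext hσσ', permClause_id]
    · -- from C to C', via π
      rintro ⟨e0, he0, heq⟩
      rcases e0 with l0 | ⟨b0, m0, D⟩
      · simp at heq
      simp only [Sum.inr.injEq, Prod.mk.injEq] at heq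
      obtain ⟨hb0, hm0, hEeq⟩ := heq
      rw [← hb0, ← hm0, ← hEeq]
      have hmem : memModal b0 m0 ⟨k, D⟩ (occClause o.1 o.2).1 (occClause o.1 o.2).2 := by
        rw [hC]; exact ⟨D, he0, rfl⟩
      have hcv : isVertex φ (Sum.inr (o.1, o.2 ++ [(b0, m0, ⟨k, D⟩)])) :=
        validOcc_append (h : validOcc φ o) _ hmem
      obtain ⟨q', s', hq', hq1, hq2, hs1, hs2⟩ :=
        child_map π ρ hρe o h (b0, m0, ⟨k, D⟩) hcv o' h2
      have hq'eq : q' = (o'.1, o'.2 ++ [s']) := Prod.ext hq1 hq2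
      have hq'v : validOcc φ q' := by
        have := (π.toEquiv ⟨Sum.inr (o.1, o.2 ++ [(b0, m0, ⟨k, D⟩)]), hcv⟩).2
        rw [hq'] at this
        exact this
      have hmem2 : memModal s'.1 s'.2.1 s'.2.2 (occClause o'.1 o'.2).1 (occClause o'.1 o'.2).2 := by
        have := hq'v.2
        rw [hq'eq] at this
        exact ((chainOK_append o'.2 o'.1 s').1 this).2
      rw [hC'] at hmem2
      obtain ⟨E', hE', hE'eq⟩ := hmem2
      dsimp only at hE'
      have hidx : (occClause (o.1, o.2 ++ [(b0, m0, (⟨k, D⟩ : SClause Atom Mod))]).1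
          (o.1, o.2 ++ [(b0, m0, (⟨k, D⟩ : SClause Atom Mod))]).2).1 = k := by
        rw [show (o.1, o.2 ++ [(b0, m0, (⟨k, D⟩ : SClause Atom Mod))]).2
            = o.2 ++ [(b0, m0, (⟨k, D⟩ : SClause Atom Mod))] from rfl,
          occClause_append]
      have hIH := IHπ (o.1, o.2 ++ [(b0, m0, ⟨k, D⟩)]) hcv hidx q' hq'
      rw [show (occClause (o.1, o.2 ++ [(b0, m0, (⟨k, D⟩ : SClause Atom Mod))]).1
            (o.1, o.2 ++ [(b0, m0, (⟨k, D⟩ : SClause Atom Mod))]).2)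
          = (⟨k, D⟩ : SClause Atom Mod) from occClause_append _ _ _] at hIH
      have hocq : occClause q'.1 q'.2 = s'.2.2 := by
        rw [hq'eq]; exact occClause_append _ _ _
      rw [hocq, hE'eq] at hIH
      have hE2 : E' = permClause (autLit π) k D := by
        have h' : (⟨k, E'⟩ : SClause Atom Mod) = ⟨k, permClause (autLit π) k D⟩ := hIH
        exact eq_of_heq (Sigma.mk.inj_iff.1 h').2
      rw [← hE2]
      have hb : b0 = s'.1 := hs1.symm
      have hm : m0 = s'.2.1 := hs2.symm
      rw [hb, hm]
      exact hE'

theorem clause_perm (π ρ : ColoredAut φ) (hρ : ρ = π.symm) :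
    ∀ k : ℕ, ClStmt π k ∧ ClStmt ρ k := by
  have hπρ : π = ρ.symm := by rw [hρ, ColoredAut.symm_symm]
  intro k
  induction k with
  | zero => exact ⟨clause_base π ρ hρ, clause_base ρ π hπρ⟩
  | succ k ih => exact ⟨clause_step π ρ hρ k ih.1 ih.2, clause_step ρ π hπρ k ih.2 ih.1⟩

/-- The vertex map induced by a literal permutation. -/
def vmap (σ : Lit Atom → Lit Atom) : Vtx Atom Mod → Vtx Atom Mod
  | Sum.inl l => Sum.inl (σ l)
  | Sum.inr o => Sum.inr (mapOcc σ o)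

theorem vmap_comp (σ τ : Lit Atom → Lit Atom) (v : Vtx Atom Mod) :
    vmap τ (vmap σ v) = vmap (τ ∘ σ) v := by
  cases v with
  | inl l => rfl
  | inr o => exact congrArg Sum.inr (mapOcc_comp σ τ o)

theorem vmap_id (v : Vtx Atom Mod) : vmap (id : Lit Atom → Lit Atom) v = v := by
  cases v with
  | inl l => rfl
  | inr o => exact congrArg Sum.inr (mapOcc_id o)

theorem vmap_isVertex {σ : Lit Atom → Lit Atom} (hcons : Consistent σ)
    (hsym : permForm σ φ = φ) (v : Vtx Atom Mod) (h : isVertex φ v) :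
    isVertex φ (vmap σ v) := by
  cases v with
  | inl l => exact atomOccurs_perm hcons hsym h
  | inr o => exact validOcc_mapOcc σ hsym h

theorem vmap_color (σ : Lit Atom → Lit Atom) (v : Vtx Atom Mod) :
    vColor (vmap σ v) = vColor v := by
  cases v with
  | inl l => rfl
  | inr o => exact occColor_mapOcc σ o

theorem vmap_edge_fwd {σ : Lit Atom → Lit Atom} (hcons : Consistent σ)
    (v w : Vtx Atom Mod) (h : GEdge v w) : GEdge (vmap σ v) (vmap σ w) := by
  have htop : ∀ (o : OccAddr Atom Mod) (l : Lit Atom),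
      l ∈ topLits (occClause o.1 o.2).1 (occClause o.1 o.2).2 →
      σ l ∈ topLits (occClause (mapOcc σ o).1 (mapOcc σ o).2).1
        (occClause (mapOcc σ o).1 (mapOcc σ o).2).2 := by
    intro o l hl
    have he : occClause (mapOcc σ o).1 (mapOcc σ o).2
        = permSClause σ (occClause o.1 o.2) := occClause_mapOcc σ o.2 o.1
    rw [he]
    exact (mem_topLits_perm σ (occClause o.1 o.2).1 (occClause o.1 o.2).2 (σ l)).2
      ⟨l, hl, rfl⟩
  cases v with
  | inl l =>
    cases w with
    | inl l' =>
      show σ l' = (σ l).flip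
      rw [show l' = l.flip from h, hcons]
    | inr o => exact htop o l h
  | inr o =>
    cases w with
    | inl l => exact htop o l h
    | inr o' =>
      rcases h with ⟨s, h1, h2⟩ | ⟨s, h1, h2⟩
      · exact Or.inl ⟨mapStep σ s, congrArg (permSClause σ) h1, by
          show (mapOcc σ o').2 = (mapOcc σ o).2 ++ [mapStep σ s]
          unfold mapOcc
          rw [h2, List.map_append]
          rfl⟩
      · exact Or.inr ⟨mapStep σ s, congrArg (permSClause σ) h1, by
          show (mapOcc σ o).2 = (mapOcc σ o').2 ++ [mapStep σ s]
          unfold mapOcc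
          rw [h2, List.map_append]
          rfl⟩

end AutAux

/-- correctness of the colored-graph construction.
(a) every consistent symmetry `σ` of `φ` induces a colored automorphism of `G(φ)`
sending the literal vertex `l` to `σ l` and each occurrence of a clause `C` to an
occurrence of `σ(C)` of the same color; (b) conversely, the restriction to literal
vertices of a colored automorphism of `G(φ)`, extended by the identity elsewhere, is a
consistent permutation which is a symmetry of `φ`. -/
theorem graph_detects_symmetries {Atom Mod : Type} [Countable Atom] [Countable Mod]
    [DecidableEq Atom] [DecidableEq Mod] {n : ℕ} (φ : FormT Atom Mod n) :
    (∀ σ : Lit Atom → Lit Atom,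
      Function.Bijective σ → Consistent σ → permForm σ φ = φ →
      ∃ π : ColoredAut φ,
        (∀ (l : Lit Atom) (h : isVertex φ (Sum.inl l)),
            (π.toEquiv ⟨Sum.inl l, h⟩).1 = Sum.inl (σ l)) ∧
        (∀ (o : OccAddr Atom Mod) (h : isVertex φ (Sum.inr o)),
            ∃ (o' : OccAddr Atom Mod) (h' : validOcc φ o'),
              π.toEquiv ⟨Sum.inr o, h⟩ = ⟨Sum.inr o', h'⟩ ∧
              occClause o'.1 o'.2 = permSClause σ (occClause o.1 o.2) ∧
              occColor o' = occColor o)) ∧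
    (∀ π : ColoredAut φ,
      ∃ σ : Lit Atom → Lit Atom,
        Function.Bijective σ ∧ Consistent σ ∧
        (∀ l : Lit Atom, ¬ atomOccurs φ l.atom → σ l = l) ∧
        (∀ (l : Lit Atom) (h : isVertex φ (Sum.inl l)),
            (π.toEquiv ⟨Sum.inl l, h⟩).1 = Sum.inl (σ l)) ∧
        permForm σ φ = φ) := by
  constructor
  · -- Part (a)
    intro σ hbij hcons hsym
    obtain ⟨τ, hτ1, hτ2⟩ := Function.bijective_iff_has_inverse.1 hbij
    have hτσ : τ ∘ σ = id := funext hτ1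
    have hστ : σ ∘ τ = id := funext hτ2
    have hconsτ : Consistent τ := by
      intro l
      apply hbij.1
      rw [hτ2 l.flip, hcons (τ l), hτ2 l]
    have hsymτ : permForm τ φ = φ := by
      have h1 : permForm τ (permForm σ φ) = φ := by
        unfold permForm
        rw [Finset.image_image]
        have hfn : ∀ C ∈ φ, (permClause τ n ∘ permClause σ n) C = id C := fun C _ => by
          simp only [Function.comp_apply, id_eq]
          rw [permClause_comp, hτσ, permClause_id]
        rw [Finset.image_congr hfn, Finset.image_id]
      conv_lhs => rw [← hsym]
      exact h1
    have hedge : ∀ v w : Vtx Atom Mod, GEdge (vmap σ v) (vmap σ w) ↔ GEdge v w := by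
      intro v w
      constructor
      · intro h
        have := vmap_edge_fwd hconsτ _ _ h
        rwa [vmap_comp, vmap_comp, hτσ, vmap_id, vmap_id] at this
      · exact vmap_edge_fwd hcons v w
    refine ⟨⟨⟨fun v => ⟨vmap σ v.1, vmap_isVertex hcons hsym v.1 v.2⟩,
              fun v => ⟨vmap τ v.1, vmap_isVertex hconsτ hsymτ v.1 v.2⟩,
              fun v => Subtype.ext (by
                show vmap τ (vmap σ v.1) = v.1
                rw [vmap_comp, hτσ, vmap_id]),
              fun v => Subtype.ext (by
                show vmap σ (vmap τ v.1) = v.1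
                rw [vmap_comp, hστ, vmap_id])⟩,
             fun v => vmap_color σ v.1,
             fun v w => hedge v.1 w.1⟩, ?_, ?_⟩
    · intro l h
      rfl
    · intro o h
      refine ⟨mapOcc σ o, vmap_isVertex hcons hsym (Sum.inr o) h, rfl, ?_,
        occColor_mapOcc σ o⟩
      exact occClause_mapOcc σ o.2 o.1
  · -- Part (b)
    intro π
    have hρ : π.symm = π.symm := rfl
    have hπρ : π = π.symm.symm := (ColoredAut.symm_symm π).symm
    refine ⟨autLit π, autLit_bijective π, autLit_consistent π, autLit_not_occurs π,
      fun l h => autLit_spec π l h, ?_⟩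
    have key : ∀ (α β : ColoredAut φ), β = α.symm →
        ∀ C ∈ φ, permClause (autLit α) n C ∈ φ := by
      intro α β hβ C hC
      have hvo : isVertex φ (Sum.inr ((⟨n, C⟩ : SClause Atom Mod),
          ([] : List (OccStep Atom Mod)))) := ⟨⟨C, hC, rfl⟩, trivial⟩
      obtain ⟨o', ho', hcol⟩ := exists_inr α (⟨n, C⟩, []) hvo
      have hnil : o'.2 = [] := (occColor_eq_top_iff o').1 (by rw [hcol]; rfl)
      have ho'' : validOcc φ o' := validOcc_image α _ hvo o' ho'
      obtain ⟨⟨C', hC', hCeq'⟩, -⟩ := ho''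
      have hcl := (clause_perm α β hβ n).1 (⟨n, C⟩, []) hvo rfl o' ho'
      have h3 : occClause o'.1 o'.2 = o'.1 := by rw [hnil]; rfl
      rw [h3, hCeq'] at hcl
      have hcl' : (⟨n, C'⟩ : SClause Atom Mod) = ⟨n, permClause (autLit α) n C⟩ := hcl
      have : C' = permClause (autLit α) n C := eq_of_heq (Sigma.mk.inj_iff.1 hcl').2
      rw [← this]
      exact hC'
    apply Finset.Subset.antisymm
    · intro x hx
      obtain ⟨C, hC, rfl⟩ := Finset.mem_image.1 hx
      exact key π π.symm rfl C hC
    · intro C hC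
      refine Finset.mem_image.2 ⟨permClause (autLit π.symm) n C, key π.symm π hπρ C hC, ?_⟩
      rw [permClause_comp,
        show (autLit π ∘ autLit π.symm) = id from funext fun l => autLit_autLit_symm π l,
        permClause_id]

end ModalSym
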